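/- arXiv:1711.01462 — 2 statements merged into one kernel-verified Lean document; each statement's English description precedes it below -/
import Mathlib

section
/- If X is connected, locally path connected, and a strong SLT space at x₀, then every semicovering map over X is a covering map. -/
open CategoryTheory unitInterval
open scoped Topology

attribute [local instance] Path.Homotopic.setoid

noncomputable section

/-- The homotopy class of a loop as an element of the fundamental group. -/
def loopClass {X : Type*} [TopologicalSpace X] {x : X} (γ : Path x x) :
    FundamentalGroup X x :=
  FundamentalGroup.fromPath (⟦γ⟧ : Path.Homotopic.Quotient x x)

variable {X : Type*} [TopologicalSpace X]

/-- The Spanier group of a family of subsets of `X`, based at `x`: the subgroup generated by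
classes `[α∗β∗α⁻¹]` where `α` is a path from `x` and `β` is a loop inside a member of `𝒰`. -/
def spanierGroupAt (x : X) (𝒰 : Set (Set X)) : Subgroup (FundamentalGroup X x) :=
  Subgroup.closure {g | ∃ (y : X) (α : Path x y) (β : Path y y) (U : Set X),
    U ∈ 𝒰 ∧ (∀ t, β t ∈ U) ∧ g = loopClass (α.trans (β.trans α.symm))}

/-- `𝒰` is an open cover of `X`. -/
def IsOpenCover (𝒰 : Set (Set X)) : Prop := (∀ U ∈ 𝒰, IsOpen U) ∧ ⋃₀ 𝒰 = Set.univ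

/-- `X` is a strong `H`-SLT space at `x₀`: for every `x ∈ X` and every open neighborhood `U`
of `x₀` there is an open neighborhood `V` of `x` such that for every loop `β` in `V` based at
`x` and every path `α` from `x₀` to `x` there is a loop `λ` in `U` based at `x₀` with
`[α∗β∗α⁻¹∗λ⁻¹] ∈ H`. -/
def StrongHSLTAt (x₀ : X) (H : Subgroup (FundamentalGroup X x₀)) : Prop :=
  ∀ (x : X) (U : Set X), IsOpen U → x₀ ∈ U →
    ∃ V : Set X, IsOpen V ∧ x ∈ V ∧
      ∀ (β : Path x x), (∀ t, β t ∈ V) → ∀ (α : Path x₀ x),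
        ∃ lam : Path x₀ x₀, (∀ t, lam t ∈ U) ∧
          loopClass (α.trans (β.trans α.symm)) * (loopClass lam)⁻¹ ∈ H

/-- A semicovering map: a local homeomorphism with unique continuous lifting of paths
and of homotopies. -/
structure IsSemicoveringMap {E : Type*} [TopologicalSpace E] (p : E → X) : Prop where
  isLocalHomeomorph : IsLocalHomeomorph p
  path_lift : ∀ (γ : C(I, X)) (e : E), p e = γ 0 →
    ∃! γ' : C(I, E), p ∘ γ' = γ ∧ γ' 0 = e
  homotopy_lift : ∀ (Hm : C(I × I, X)) (e : E), p e = Hm (0, 0) →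
    ∃! H' : C(I × I, E), p ∘ H' = Hm ∧ H' (0, 0) = e

namespace IsSemicoveringMap

variable {E : Type*} [TopologicalSpace E] {p : E → X} (hp : IsSemicoveringMap p)

/-- The chosen lift of a continuous map from `I`. -/
def liftCM (γ : C(I, X)) (e : E) (he : p e = γ 0) : C(I, E) :=
  (hp.path_lift γ e he).exists.choose

lemma proj_liftCM (γ : C(I, X)) (e : E) (he : p e = γ 0) :
    p ∘ hp.liftCM γ e he = γ :=
  (hp.path_lift γ e he).exists.choose_spec.1

lemma liftCM_zero (γ : C(I, X)) (e : E) (he : p e = γ 0) :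
    hp.liftCM γ e he 0 = e :=
  (hp.path_lift γ e he).exists.choose_spec.2

lemma liftCM_unique (γ : C(I, X)) (e : E) (he : p e = γ 0) (γ' : C(I, E))
    (h1 : p ∘ γ' = γ) (h2 : γ' 0 = e) : γ' = hp.liftCM γ e he :=
  (hp.path_lift γ e he).unique ⟨h1, h2⟩
    ⟨hp.proj_liftCM γ e he, hp.liftCM_zero γ e he⟩

variable {a b c : X}

/-- The endpoint of the lift of a path, as a total function. -/
def liftEnd (γ : Path a b) (e : E) : E :=
  haveI := Classical.dec (p e = a)
  if he : p e = a then hp.liftCM γ.toContinuousMap e (by simpa using he) 1 else e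

/-- Master uniqueness lemma: any concrete lift computes `liftEnd`. -/
lemma liftEnd_eq (γ : Path a b) {e e' : E} (η : Path e e')
    (hη : ∀ t, p (η t) = γ t) : hp.liftEnd γ e = e' := by
  have he : p e = a := by
    have := hη 0; simpa using this
  rw [liftEnd, dif_pos he]
  have h1 : p ∘ η.toContinuousMap = γ.toContinuousMap := by
    funext t; simpa using hη t
  have := hp.liftCM_unique γ.toContinuousMap e (by simpa using he) η.toContinuousMap h1
    (by simp)
  have h2 := congrArg (fun f : C(I, E) => f 1) this
  simpa using h2.symm

/-- The lift of a path as a path. -/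
def liftPath (γ : Path a b) (e : E) (he : p e = a) : Path e (hp.liftEnd γ e) where
  toContinuousMap := hp.liftCM γ.toContinuousMap e (by simpa using he)
  source' := hp.liftCM_zero _ _ _
  target' := by rw [liftEnd, dif_pos he]; rfl

lemma liftPath_proj (γ : Path a b) (e : E) (he : p e = a) (t : I) :
    p (hp.liftPath γ e he t) = γ t :=
  congrFun (hp.proj_liftCM γ.toContinuousMap e (by simpa using he)) t

lemma liftEnd_proj (γ : Path a b) (e : E) (he : p e = a) :
    p (hp.liftEnd γ e) = b := by
  have := hp.liftPath_proj γ e he 1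
  simpa using this

lemma liftEnd_refl (e : E) (he : p e = a) : hp.liftEnd (Path.refl a) e = e :=
  hp.liftEnd_eq (Path.refl a) (Path.refl e) (fun t => by simpa using he)

lemma liftEnd_trans (α : Path a b) (β : Path b c) (e : E) (he : p e = a) :
    hp.liftEnd (α.trans β) e = hp.liftEnd β (hp.liftEnd α e) := by
  have hb : p (hp.liftEnd α e) = b := hp.liftEnd_proj α e he
  refine (hp.liftEnd_eq (α.trans β)
    ((hp.liftPath α e he).trans (hp.liftPath β _ hb)) fun t => ?_)
  rw [Path.trans_apply, Path.trans_apply]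
  split_ifs with h
  · exact hp.liftPath_proj α e he _
  · exact hp.liftPath_proj β _ hb _

lemma liftEnd_symm (γ : Path a b) (e : E) (he : p e = a) :
    hp.liftEnd γ.symm (hp.liftEnd γ e) = e :=
  hp.liftEnd_eq γ.symm (hp.liftPath γ e he).symm
    (fun t => hp.liftPath_proj γ e he (σ t))

lemma liftEnd_symm' (γ : Path a b) (e' : E) (he' : p e' = b) :
    hp.liftEnd γ (hp.liftEnd γ.symm e') = e' := by
  have := hp.liftEnd_symm γ.symm e' he'
  rwa [Path.symm_symm] at this

lemma liftEnd_homotopic (γ₁ γ₂ : Path a b) (h : γ₁.Homotopic γ₂) (e : E)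
    (he : p e = a) : hp.liftEnd γ₁ e = hp.liftEnd γ₂ e := by
  obtain ⟨H⟩ := h
  set HC : C(I × I, X) := H.toHomotopy.toContinuousMap with hHC
  have hHCapp : ∀ q : I × I, HC q = H q := fun q => rfl
  have h00 : p e = HC (0, 0) := by rw [hHCapp, H.apply_zero]; simpa using he
  set K : C(I × I, E) := (hp.homotopy_lift HC e h00).exists.choose with hK
  obtain ⟨hKp, hK0⟩ := (hp.homotopy_lift HC e h00).exists.choose_spec
  have hKp' : ∀ q : I × I, p (K q) = H q := fun q => congrFun hKp q
  -- the bottom edge is constant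
  have hbot : ∀ t : I, K (t, 0) = e := by
    have hca : p e = (ContinuousMap.const I a) 0 := he
    have hb1 : (⟨fun t => K (t, 0), by fun_prop⟩ : C(I, E)) =
        hp.liftCM (ContinuousMap.const I a) e hca := by
      refine hp.liftCM_unique _ _ _ _ ?_ ?_
      · funext t; show p (K (t, 0)) = a; rw [hKp', H.source]
      · show K (0, 0) = e; exact hK0
    have hb2 : (ContinuousMap.const I e) = hp.liftCM (ContinuousMap.const I a) e hca := by
      refine hp.liftCM_unique _ _ _ _ ?_ rfl
      funext t; show p e = a; exact he
    intro t
    have := congrArg (fun f : C(I, E) => f t) (hb1.trans hb2.symm)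
    simpa using this
  -- the left edge lifts γ₁
  have hleft : ∀ s : I, K (0, s) = hp.liftPath γ₁ e he s := by
    have h1 : (⟨fun s => K (0, s), by fun_prop⟩ : C(I, E)) =
        hp.liftCM γ₁.toContinuousMap e (by simpa using he) := by
      refine hp.liftCM_unique _ _ _ _ ?_ hK0
      funext s; show p (K (0, s)) = γ₁ s; rw [hKp', H.apply_zero]; rfl
    intro s
    have := congrArg (fun f : C(I, E) => f s) h1
    simpa [liftPath] using this
  -- the right edge lifts γ₂
  have hright : ∀ s : I, K (1, s) = hp.liftPath γ₂ e he s := by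
    have h1 : (⟨fun s => K (1, s), by fun_prop⟩ : C(I, E)) =
        hp.liftCM γ₂.toContinuousMap e (by simpa using he) := by
      refine hp.liftCM_unique _ _ _ _ ?_ (hbot 1)
      funext s; show p (K (1, s)) = γ₂ s; rw [hKp', H.apply_one]; rfl
    intro s
    have := congrArg (fun f : C(I, E) => f s) h1
    simpa [liftPath] using this
  -- the top edge is constant
  have htopc : p (K (0, 1)) = b := by rw [hKp', H.target]
  have htop : K (1, 1) = K (0, 1) := by
    have hcb : p (K (0, 1)) = (ContinuousMap.const I b) 0 := htopc
    have h1 : (⟨fun t => K (t, 1), by fun_prop⟩ : C(I, E)) =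
        hp.liftCM (ContinuousMap.const I b) (K (0, 1)) hcb := by
      refine hp.liftCM_unique _ _ _ _ ?_ rfl
      funext t; show p (K (t, 1)) = b; rw [hKp', H.target]
    have h2 : (ContinuousMap.const I (K (0, 1))) =
        hp.liftCM (ContinuousMap.const I b) (K (0, 1)) hcb := by
      refine hp.liftCM_unique _ _ _ _ ?_ rfl
      funext t; show p (K (0, 1)) = b; exact htopc
    have := congrArg (fun f : C(I, E) => f 1) (h1.trans h2.symm)
    simpa using this
  have e1 : hp.liftEnd γ₁ e = K (0, 1) := by
    have := hleft 1
    rw [this]; simp [liftPath, liftEnd, dif_pos he]; rfl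
  have e2 : hp.liftEnd γ₂ e = K (1, 1) := by
    have := hright 1
    rw [this]; simp [liftPath, liftEnd, dif_pos he]; rfl
  rw [e1, e2, htop]

/-- Lifting a path that stays inside the target of a partial homeomorphism agreeing
with `p`. -/
lemma liftEnd_mem_target (φ : OpenPartialHomeomorph E X) (hφ : p = φ)
    (γ : Path a b) (hγ : ∀ t, γ t ∈ φ.target) :
    hp.liftEnd γ (φ.symm a) = φ.symm b := by
  have ha : a ∈ φ.target := by have := hγ 0; rwa [γ.source] at this
  have hb : b ∈ φ.target := by have := hγ 1; rwa [γ.target] at this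
  refine hp.liftEnd_eq γ
    ⟨⟨fun t => φ.symm (γ t), ?_⟩, by show φ.symm (γ 0) = _; rw [γ.source], by show φ.symm (γ 1) = _; rw [γ.target]⟩ fun t => ?_
  · exact φ.continuousOn_invFun.comp_continuous γ.continuous hγ
  · show p (φ.symm (γ t)) = γ t
    rw [hφ]; exact φ.right_inv (hγ t)

end IsSemicoveringMap

namespace SemicovAux

/-- Project a path in `E` down to a path in `X`. -/
def projPath {X E : Type*} [TopologicalSpace X] [TopologicalSpace E] (p : E → X)
    (hc : Continuous p) {e₁ e₂ : E} (g : Path e₁ e₂) {y₁ y₂ : X}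
    (h1 : p e₁ = y₁) (h2 : p e₂ = y₂) : Path y₁ y₂ where
  toFun := fun t => p (g t)
  continuous_toFun := hc.comp g.continuous
  source' := by show p (g 0) = y₁; rw [g.source, h1]
  target' := by show p (g 1) = y₂; rw [g.target, h2]

@[simp] lemma projPath_apply {X E : Type*} [TopologicalSpace X] [TopologicalSpace E]
    {p : E → X} {hc : Continuous p} {e₁ e₂ : E} {g : Path e₁ e₂} {y₁ y₂ : X}
    {h1 : p e₁ = y₁} {h2 : p e₂ = y₂} (t : unitInterval) :
    projPath p hc g h1 h2 t = p (g t) := rfl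

lemma trans_mem {X : Type*} [TopologicalSpace X] {a b c : X} {s : Set X}
    {α : Path a b} {β : Path b c} (hα : ∀ t, α t ∈ s) (hβ : ∀ t, β t ∈ s) :
    ∀ t, (α.trans β) t ∈ s := by
  intro t
  rw [Path.trans_apply]
  split_ifs
  · exact hα _
  · exact hβ _

lemma symm_mem {X : Type*} [TopologicalSpace X] {a b : X} {s : Set X}
    {γ : Path a b} (hγ : ∀ t, γ t ∈ s) : ∀ t, γ.symm t ∈ s :=
  fun t => hγ (unitInterval.symm t)

end SemicovAux

theorem semicovering_isCoveringMap_of_strongSLTAt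
    {X' : Type*} [TopologicalSpace X'] [ConnectedSpace X'] [LocallyPathConnectedSpace X']
    (x₀ : X') (hX : StrongHSLTAt x₀ (⊥ : Subgroup (FundamentalGroup X' x₀))) :
    ∀ (E : Type*) [TopologicalSpace E] [ConnectedSpace E] [LocallyPathConnectedSpace E]
      (p : E → X'), IsSemicoveringMap p → IsCoveringMap p := by
  classical
  intro E _ _ _ p hp
  have pcont : Continuous p := hp.isLocalHomeomorph.continuous
  have popen : IsOpenMap p := hp.isLocalHomeomorph.isOpenMap
  haveI pcX : PathConnectedSpace X' := pathConnectedSpace_iff_connectedSpace.mpr ‹_›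
  haveI pcE : PathConnectedSpace E := pathConnectedSpace_iff_connectedSpace.mpr ‹_›
  -- surjectivity of p
  have psurj : Function.Surjective p := by
    intro y
    obtain ⟨e₁⟩ : Nonempty E := inferInstance
    obtain ⟨g⟩ : Joined (p e₁) y := PathConnectedSpace.joined _ _
    exact ⟨hp.liftEnd g e₁, hp.liftEnd_proj g e₁ rfl⟩
  -- fibers are discrete
  have hdisc : ∀ y : X', DiscreteTopology (p ⁻¹' {y}) := by
    intro y
    rw [discreteTopology_iff_isOpen_singleton]
    rintro ⟨e, he⟩
    obtain ⟨φ, heφ, hφ⟩ := hp.isLocalHomeomorph e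
    have : (Subtype.val ⁻¹' φ.source : Set (p ⁻¹' {y})) = {⟨e, he⟩} := by
      ext ⟨e', he'⟩
      simp only [Set.mem_preimage, Set.mem_singleton_iff, Subtype.mk_eq_mk]
      constructor
      · intro hs
        refine φ.injOn hs heφ ?_
        rw [← hφ]
        rw [Set.mem_preimage, Set.mem_singleton_iff] at he he'
        rw [he, he']
      · rintro rfl; exact heφ
    rw [← this]
    exact φ.open_source.preimage continuous_subtype_val
  -- base lift of x₀
  obtain ⟨e₀, he₀⟩ := psurj x₀
  obtain ⟨φ₀, he₀φ, hφ₀⟩ := hp.isLocalHomeomorph e₀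
  have hx₀U : x₀ ∈ φ₀.target := by
    rw [← he₀, hφ₀]; exact φ₀.map_source he₀φ
  have he₀symm : φ₀.symm x₀ = e₀ := by
    rw [← he₀, hφ₀]; exact φ₀.left_inv he₀φ
  intro x
  obtain ⟨V, hVopen, hxV, hV⟩ := hX x φ₀.target φ₀.open_target hx₀U
  -- Claim A: loops in V based at x lift to loops at every point of the fiber of x
  have claimA : ∀ (β : Path x x), (∀ t, β t ∈ V) → ∀ e, p e = x →
      hp.liftEnd β e = e := by
    intro β hβ e he
    obtain ⟨g⟩ : Joined e₀ e := PathConnectedSpace.joined _ _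
    set α : Path x₀ x := SemicovAux.projPath p pcont g he₀ he with hα
    obtain ⟨lam, hlamU, hmem⟩ := hV β hβ α
    rw [Subgroup.mem_bot, mul_inv_eq_one] at hmem
    have hhom : (α.trans (β.trans α.symm)).Homotopic lam := by
      exact Quotient.exact (hmem : (⟦α.trans (β.trans α.symm)⟧ : Path.Homotopic.Quotient x₀ x₀) = ⟦lam⟧)
    have h1 : hp.liftEnd (α.trans (β.trans α.symm)) e₀ = hp.liftEnd lam e₀ :=
      hp.liftEnd_homotopic _ _ hhom e₀ he₀
    have h2 : hp.liftEnd lam e₀ = e₀ := by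
      have := hp.liftEnd_mem_target φ₀ hφ₀ lam hlamU
      rwa [he₀symm] at this
    have hαe : hp.liftEnd α e₀ = e := hp.liftEnd_eq α g fun t => rfl
    rw [hp.liftEnd_trans α (β.trans α.symm) e₀ he₀, hαe,
      hp.liftEnd_trans β α.symm e he] at h1
    -- h1 : liftEnd α.symm (liftEnd β e) = liftEnd lam e₀ = e₀
    rw [h2] at h1
    have hβe : p (hp.liftEnd β e) = x := hp.liftEnd_proj β e he
    have := hp.liftEnd_symm' α (hp.liftEnd β e) hβe
    rw [h1, hαe] at this
    exact this.symm
  -- the path component of x in V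
  set V' : Set X' := pathComponentIn V x with hV'
  have hV'open : IsOpen V' := hVopen.pathComponentIn x
  have hxV' : x ∈ V' := mem_pathComponentIn_self hxV
  have hV'subV : V' ⊆ V := pathComponentIn_subset
  have hV'pc : IsPathConnected V' := isPathConnected_pathComponentIn hxV
  -- Claim B: loops in V' lift to loops at every point above them
  have claimB : ∀ (y : X') (γ : Path y y), (∀ t, γ t ∈ V') → ∀ e', p e' = y →
      hp.liftEnd γ e' = e' := by
    intro y γ hγ e' he'
    have hyV' : y ∈ V' := by have := hγ 0; rwa [γ.source] at this
    have hδJ : JoinedIn V x y := hyV'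
    set δ : Path x y := hδJ.somePath with hδdef
    have hδV : ∀ t, δ t ∈ V := hδJ.somePath_mem
    have hLV : ∀ t, (δ.trans (γ.trans δ.symm)) t ∈ V :=
      SemicovAux.trans_mem hδV (SemicovAux.trans_mem (fun t => hV'subV (hγ t))
        (SemicovAux.symm_mem hδV))
    set e'' : E := hp.liftEnd δ.symm e' with he''def
    have hpe'' : p e'' = x := hp.liftEnd_proj δ.symm e' he'
    have hA := claimA (δ.trans (γ.trans δ.symm)) hLV e'' hpe''
    have hδe'' : hp.liftEnd δ e'' = e' := hp.liftEnd_symm' δ e' he'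
    rw [hp.liftEnd_trans δ (γ.trans δ.symm) e'' hpe'', hδe'',
      hp.liftEnd_trans γ δ.symm e' he'] at hA
    have hγe' : p (hp.liftEnd γ e') = y := hp.liftEnd_proj γ e' he'
    have := hp.liftEnd_symm' δ (hp.liftEnd γ e') hγe'
    rw [hA, hδe''] at this
    exact this.symm
  -- chosen paths from points of V' to x
  have hδx : ∀ y ∈ V', JoinedIn V' y x := fun y hy => hV'pc.joinedIn y hy x hxV'
  set δ : ∀ y, y ∈ V' → Path y x := fun y hy => (hδx y hy).somePath with hδdef
  have hδmem : ∀ (y) (hy : y ∈ V') (t), δ y hy t ∈ V' :=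
    fun y hy => (hδx y hy).somePath_mem
  -- the fiber over x
  have hfib : ∀ i : (p ⁻¹' {x} : Set E), p i = x := fun i => i.2
  obtain ⟨ex, hex⟩ := psurj x
  set i₀ : (p ⁻¹' {x} : Set E) := ⟨ex, hex⟩ with hi₀
  -- the index map
  set q : E → (p ⁻¹' {x} : Set E) := fun e =>
    if h : p e ∈ V' then
      ⟨hp.liftEnd (δ (p e) h) e, hp.liftEnd_proj (δ (p e) h) e rfl⟩
    else i₀ with hqdef
  -- q is independent of the choice of path
  have q_eq : ∀ (e : E) (δ' : Path (p e) x), (∀ t, δ' t ∈ V') →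
      (q e : E) = hp.liftEnd δ' e := by
    intro e δ' hδ'
    have hpe : p e ∈ V' := by have := hδ' 0; rwa [δ'.source] at this
    have hqe : (q e : E) = hp.liftEnd (δ (p e) hpe) e := by
      rw [hqdef]; simp only [dif_pos hpe]
    rw [hqe]
    have hLV' : ∀ t, (δ'.trans (δ (p e) hpe).symm) t ∈ V' :=
      SemicovAux.trans_mem hδ' (SemicovAux.symm_mem (hδmem (p e) hpe))
    have hB := claimB (p e) (δ'.trans (δ (p e) hpe).symm) hLV' e rfl
    rw [hp.liftEnd_trans δ' (δ (p e) hpe).symm e rfl] at hB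
    have hδ'e : p (hp.liftEnd δ' e) = x := hp.liftEnd_proj δ' e rfl
    have := hp.liftEnd_symm' (δ (p e) hpe) (hp.liftEnd δ' e) hδ'e
    rw [hB] at this
    exact this
  -- q is the identity on the fiber
  have q_fiber : ∀ e, p e = x → (q e : E) = e := by
    intro e he
    have hδ' : ∀ t, ((Path.refl x).cast he rfl) t ∈ V' := fun t => hxV'
    rw [q_eq e ((Path.refl x).cast he rfl) hδ']
    exact hp.liftEnd_eq _ (Path.refl e) fun t => he
  -- q is locally constant
  have qconst : ∀ a b, JoinedIn (p ⁻¹' V') a b → q a = q b := by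
    intro a b h
    have haV' : p a ∈ V' := h.source_mem
    set η : Path a b := h.somePath with hηdef
    have hηmem : ∀ t, η t ∈ p ⁻¹' V' := h.somePath_mem
    set pη : Path (p a) (p b) := SemicovAux.projPath p pcont η rfl rfl with hpηdef
    have hpηV' : ∀ t, pη t ∈ V' := fun t => hηmem t
    have hmemtot : ∀ t, (pη.symm.trans (δ (p a) haV')) t ∈ V' :=
      SemicovAux.trans_mem (SemicovAux.symm_mem hpηV') (hδmem (p a) haV')
    have h1 : (q b : E) = hp.liftEnd (pη.symm.trans (δ (p a) haV')) b :=
      q_eq b (pη.symm.trans (δ (p a) haV')) hmemtot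
    have hpηa : hp.liftEnd pη a = b := hp.liftEnd_eq pη η fun t => rfl
    have h2 : hp.liftEnd pη.symm b = a := by
      have := hp.liftEnd_symm pη a rfl
      rwa [hpηa] at this
    rw [hp.liftEnd_trans pη.symm (δ (p a) haV') b rfl, h2] at h1
    have h3 : (q a : E) = hp.liftEnd (δ (p a) haV') a := by
      rw [hqdef]; simp only [dif_pos haV']
    exact Subtype.ext (h3.trans h1.symm)
  -- sheets
  set S : (p ⁻¹' {x} : Set E) → Set E :=
    fun i => pathComponentIn (p ⁻¹' V') (i : E) with hSdef
  have hSopen : ∀ i, IsOpen (S i) := fun i =>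
    (hV'open.preimage pcont).pathComponentIn _
  -- injectivity of p on each sheet
  have inj : ∀ (i : (p ⁻¹' {x} : Set E)) a b, a ∈ S i → b ∈ S i → p a = p b →
      a = b := by
    intro i a b ha hb hab
    have hJab : JoinedIn (p ⁻¹' V') a b := (JoinedIn.symm ha).trans hb
    set η : Path a b := hJab.somePath with hηdef
    have hηmem : ∀ t, η t ∈ p ⁻¹' V' := hJab.somePath_mem
    set L : Path (p a) (p a) := SemicovAux.projPath p pcont η rfl hab.symm with hLdef
    have hLV' : ∀ t, L t ∈ V' := fun t => hηmem t
    have hB := claimB (p a) L hLV' a rfl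
    have := hp.liftEnd_eq L η fun t => rfl
    rw [hB] at this
    exact this
  -- lifts of paths in V' stay in sheets
  have lift_mem : ∀ {y z : X'} (γ : Path y z) (e : E) (he : p e = y),
      (∀ t, γ t ∈ V') → JoinedIn (p ⁻¹' V') e (hp.liftEnd γ e) := by
    intro y z γ e he hγ
    exact ⟨hp.liftPath γ e he, fun t => by
      have := hp.liftPath_proj γ e he t
      simp only [Set.mem_preimage, this]
      exact hγ t⟩
  -- the inverse map
  set r : X' × (p ⁻¹' {x} : Set E) → E := fun z =>
    if h : z.1 ∈ V' then hp.liftEnd (δ z.1 h).symm (z.2 : E) else (z.2 : E)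
    with hrdef
  have hr_eq : ∀ (w) (hw : w ∈ V') (i : (p ⁻¹' {x} : Set E)),
      r (w, i) = hp.liftEnd (δ w hw).symm (i : E) := by
    intro w hw i; rw [hrdef]; simp only [dif_pos hw]
  have hr_proj : ∀ (w) (hw : w ∈ V') (i), p (r (w, i)) = w := by
    intro w hw i
    rw [hr_eq w hw i]
    exact hp.liftEnd_proj (δ w hw).symm (i : E) (hfib i)
  have hr_sheet : ∀ (w) (hw : w ∈ V') (i), r (w, i) ∈ S i := by
    intro w hw i
    rw [hr_eq w hw i]
    exact lift_mem (δ w hw).symm (i : E) (hfib i) (SemicovAux.symm_mem (hδmem w hw))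
  have hq_r : ∀ (w) (hw : w ∈ V') (i), q (r (w, i)) = i := by
    intro w hw i
    have hpr : p (r (w, i)) = w := hr_proj w hw i
    have hcast : ∀ t, ((δ w hw).cast hpr rfl) t ∈ V' := fun t => hδmem w hw t
    refine Subtype.ext ?_
    have h0 : (q (r (w, i)) : E) = hp.liftEnd ((δ w hw).cast hpr rfl) (r (w, i)) :=
      q_eq _ _ hcast
    rw [h0]
    refine hp.liftEnd_eq _
      (((hp.liftPath (δ w hw).symm (i : E) (hfib i)).symm).cast (hr_eq w hw i) rfl)
      fun t => ?_
    show p (hp.liftPath (δ w hw).symm (i : E) (hfib i) (unitInterval.symm t)) = _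
    rw [hp.liftPath_proj (δ w hw).symm (i : E) (hfib i) (unitInterval.symm t)]
    show (δ w hw) (unitInterval.symm (unitInterval.symm t)) = (δ w hw) t
    rw [unitInterval.symm_symm]
  haveI : DiscreteTopology (p ⁻¹' {x} : Set E) := hdisc x
  refine IsEvenlyCovered.of_trivialization (t := {
      toFun := fun e => (p e, q e)
      invFun := r
      source := p ⁻¹' V'
      target := V' ×ˢ Set.univ
      map_source' := fun e he => ⟨he, trivial⟩
      map_target' := by
        rintro ⟨v, i⟩ ⟨hv, -⟩
        show p (r (v, i)) ∈ V'
        rw [hr_proj v hv i]; exact hv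
      left_inv' := by
        intro e he
        show r (p e, q e) = e
        have h1 : (q e : E) = hp.liftEnd (δ (p e) he) e :=
          q_eq e (δ (p e) he) (hδmem (p e) he)
        rw [hr_eq (p e) he (q e), h1]
        exact hp.liftEnd_symm (δ (p e) he) e rfl
      right_inv' := by
        rintro ⟨v, i⟩ ⟨hv, -⟩
        show (p (r (v, i)), q (r (v, i))) = (v, i)
        rw [hr_proj v hv i, hq_r v hv i]
      open_source := hV'open.preimage pcont
      open_target := hV'open.prod isOpen_univ
      continuousOn_toFun := by
        intro e he
        refine (ContinuousAt.prodMk (pcont.continuousAt) ?_).continuousWithinAt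
        have hN : IsOpen (pathComponentIn (p ⁻¹' V') e) :=
          (hV'open.preimage pcont).pathComponentIn e
        have heN : e ∈ pathComponentIn (p ⁻¹' V') e := mem_pathComponentIn_self he
        have hconst : ∀ e' ∈ pathComponentIn (p ⁻¹' V') e, q e' = q e :=
          fun e' he' => (qconst e e' he').symm
        exact continuousAt_const.congr
          (Filter.eventuallyEq_of_mem (hN.mem_nhds heN) hconst).symm
      continuousOn_invFun := by
        rintro ⟨v, i⟩ ⟨hv, -⟩
        have hO : IsOpen (V' ×ˢ ({i} : Set (p ⁻¹' {x} : Set E))) :=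
          hV'open.prod (isOpen_discrete _)
        have hzO : (v, i) ∈ V' ×ˢ ({i} : Set (p ⁻¹' {x} : Set E)) := ⟨hv, rfl⟩
        rw [← continuousWithinAt_inter (hO.mem_nhds hzO)]
        refine ContinuousWithinAt.mono ?_ Set.inter_subset_right
        refine tendsto_nhds.mpr fun O₂ hO₂open hrO₂ => ?_
        have hriS : r (v, i) ∈ O₂ ∩ S i := ⟨hrO₂, hr_sheet v hv i⟩
        have hWopen : IsOpen (p '' (O₂ ∩ S i)) :=
          popen _ (hO₂open.inter (hSopen i))
        have hvW : v ∈ p '' (O₂ ∩ S i) := ⟨r (v, i), hriS, hr_proj v hv i⟩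
        rw [mem_nhdsWithin]
        refine ⟨(p '' (O₂ ∩ S i)) ×ˢ Set.univ, hWopen.prod isOpen_univ,
          ⟨hvW, trivial⟩, ?_⟩
        rintro ⟨w, j⟩ ⟨⟨hwW, -⟩, hwV', hj⟩
        have hj' : j = i := hj
        subst hj'
        obtain ⟨c, hcO, hpc⟩ := hwW
        have h1 : r (w, j) = c := by
          refine inj j _ _ (hr_sheet w hwV' j) hcO.2 ?_
          rw [hr_proj w hwV' j, hpc]
        show r (w, j) ∈ O₂
        rw [h1]; exact hcO.1
      baseSet := V'
      open_baseSet := hV'open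
      source_eq := rfl
      target_eq := rfl
      proj_toFun := fun e _ => rfl }) hxV'

end
end

section
/- Let H ≤ π₁^s(X,x₀) (the subgroup of small loops). If X is an H-SLT space at x₀, then π₁^s(X,x₀) equals the path Spanier group π̃₁^{sp}(X,x₀). -/
open CategoryTheory unitInterval
open scoped Topology

attribute [local instance] Path.Homotopic.setoid

noncomputable section

variable {X : Type*} [TopologicalSpace X]

/-- The set of classes of small loops at `x₀`: loops that, for every open neighborhood `U`
of `x₀`, are homotopic (rel endpoints) to a loop inside `U`. -/
def smallLoopSet (x₀ : X) : Set (FundamentalGroup X x₀) :=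
  {g | ∀ U : Set X, IsOpen U → x₀ ∈ U →
    ∃ γ : Path x₀ x₀, (∀ t, γ t ∈ U) ∧ loopClass γ = g}

/-- A path open cover: a choice, for each path `α` from `x₀`, of an open neighborhood
of its endpoint `α(1)`. -/
def IsPathOpenCover (x₀ : X) (V : (Σ y : X, Path x₀ y) → Set X) : Prop :=
  ∀ a, IsOpen (V a) ∧ a.1 ∈ V a

/-- The path Spanier subgroup `π̃(𝒱, x₀)`, generated by `[α∗β∗α⁻¹]` with `β` a loop
in `V_α`. -/
def pathSpanierSub (x₀ : X) (V : (Σ y : X, Path x₀ y) → Set X) :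
    Subgroup (FundamentalGroup X x₀) :=
  Subgroup.closure {g | ∃ (y : X) (α : Path x₀ y) (β : Path y y),
    (∀ t, β t ∈ V ⟨y, α⟩) ∧ g = loopClass (α.trans (β.trans α.symm))}

/-- The path Spanier group `π̃₁^{sp}(X, x₀)`: the intersection of all path Spanier
subgroups over path open covers. -/
def pathSpanierWhole (x₀ : X) : Subgroup (FundamentalGroup X x₀) :=
  ⨅ (V : (Σ y : X, Path x₀ y) → Set X) (_ : IsPathOpenCover x₀ V), pathSpanierSub x₀ V

/-- The Spanier group `π₁^{sp}(X, x₀)`: the intersection of the Spanier subgroups over all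
open covers of `X`. -/
def spanierWhole (x₀ : X) : Subgroup (FundamentalGroup X x₀) :=
  ⨅ (𝒰 : Set (Set X)) (_ : IsOpenCover 𝒰), spanierGroupAt x₀ 𝒰


lemma loopClass_hom {X : Type*} [TopologicalSpace X] {x : X} (γ : Path x x) :
    loopClass γ = FundamentalGroup.fromPath (⟦γ⟧ : Path.Homotopic.Quotient x x) := rfl

lemma loopClass_trans {X : Type*} [TopologicalSpace X] {x : X} (γ δ : Path x x) :
    loopClass (γ.trans δ) = loopClass δ * loopClass γ := by
  rfl

lemma loopClass_refl {X : Type*} [TopologicalSpace X] (x : X) :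
    loopClass (Path.refl x) = 1 := by
  rfl

lemma loopClass_symm {X : Type*} [TopologicalSpace X] {x : X} (γ : Path x x) :
    loopClass γ.symm = (loopClass γ)⁻¹ := by
  apply eq_inv_of_mul_eq_one_left
  rw [← loopClass_trans]
  have h : (γ.trans γ.symm).Homotopic (Path.refl x) :=
    ⟨(Path.Homotopy.reflTransSymm γ).symm⟩
  have : loopClass (γ.trans γ.symm) = loopClass (Path.refl x) := by
    exact Quotient.sound h
  rw [this, loopClass_refl]

/-- The subgroup of classes of loops contained in `U`. -/
def loopsIn {X : Type*} [TopologicalSpace X] (x₀ : X) (U : Set X) (hU : x₀ ∈ U) :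
    Subgroup (FundamentalGroup X x₀) where
  carrier := {g | ∃ γ : Path x₀ x₀, (∀ t, γ t ∈ U) ∧ loopClass γ = g}
  one_mem' := ⟨Path.refl x₀, fun _ => by simpa using hU, loopClass_refl x₀⟩
  mul_mem' := by
    rintro a b ⟨γ, hγ, rfl⟩ ⟨δ, hδ, rfl⟩
    refine ⟨δ.trans γ, ?_, (loopClass_trans δ γ)⟩
    intro t
    rw [Path.trans_apply]
    split_ifs <;> [exact hδ _; exact hγ _]
  inv_mem' := by
    rintro a ⟨γ, hγ, rfl⟩
    exact ⟨γ.symm, fun t => hγ _, loopClass_symm γ⟩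

/-- `X` is an `H`-SLT space at `x₀`. -/
def HSLTAt (x₀ : X) (H : Subgroup (FundamentalGroup X x₀)) : Prop :=
  ∀ (y : X) (α : Path x₀ y), ∃ V : Set X, IsOpen V ∧ y ∈ V ∧
    ∀ (β : Path y y), (∀ t, β t ∈ V) → ∀ (U : Set X), IsOpen U → x₀ ∈ U →
      ∃ lam : Path x₀ x₀, (∀ t, lam t ∈ U) ∧
        loopClass (α.trans (β.trans α.symm)) * (loopClass lam)⁻¹ ∈ H

theorem smallLoopSet_eq_pathSpanier_of_HSLT
    {x₀ : X} (H : Subgroup (FundamentalGroup X x₀))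
    (hH : (H : Set (FundamentalGroup X x₀)) ⊆ smallLoopSet x₀)
    (hSLT : HSLTAt x₀ H) :
    smallLoopSet x₀ = (pathSpanierWhole x₀ : Set (FundamentalGroup X x₀)) := by
  ext g
  constructor
  · -- small loops lie in every path Spanier subgroup
    intro hg
    rw [SetLike.mem_coe, pathSpanierWhole, Subgroup.mem_iInf]
    intro V
    rw [Subgroup.mem_iInf]
    intro hV
    obtain ⟨hVo, hVm⟩ := hV ⟨x₀, Path.refl x₀⟩
    obtain ⟨γ, hγ, hγc⟩ := hg _ hVo hVm
    apply Subgroup.subset_closure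
    refine ⟨x₀, Path.refl x₀, γ, hγ, ?_⟩
    rw [loopClass_trans, loopClass_trans, Path.refl_symm, loopClass_refl,
      mul_one, one_mul, hγc]
  · -- path Spanier group elements are small
    intro hg
    intro U hUo hUm
    choose V hVo hVm hVkey using fun (a : Σ y : X, Path x₀ y) => hSLT a.1 a.2
    have hcov : IsPathOpenCover x₀ V := fun a => ⟨hVo a, hVm a⟩
    rw [SetLike.mem_coe, pathSpanierWhole, Subgroup.mem_iInf] at hg
    have hg' := hg V
    rw [Subgroup.mem_iInf] at hg'
    have hg2 : g ∈ pathSpanierSub x₀ V := hg' hcov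
    have hle : pathSpanierSub x₀ V ≤ loopsIn x₀ U hUm := by
      apply Subgroup.closure_le _ |>.mpr
      rintro _ ⟨y, α, β, hβ, rfl⟩
      obtain ⟨lam, hlam, hmem⟩ := hVkey ⟨y, α⟩ β hβ U hUo hUm
      obtain ⟨μ, hμ, hμc⟩ := hH hmem U hUo hUm
      refine ⟨lam.trans μ, ?_, ?_⟩
      · intro t
        rw [Path.trans_apply]
        split_ifs <;> [exact hlam _; exact hμ _]
      · rw [loopClass_trans, hμc, inv_mul_cancel_right]
    exact hle hg2


end
end
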